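/- arXiv:2204.01858 — 2 statements merged into one kernel-verified Lean document; each statement's English description precedes it below -/
import Mathlib

section
/- For every integer n ≥ 3, the number of distinct prime factors of n satisfies ω(n) ≤ 1.4 · log n / log(log n). -/
def ww (j : ℕ) : ℕ := if j % 2 = 0 then 3*j - 5 else 3*j - 4

def cc : ℕ → ℕ
  | 0 => 1
  | 1 => 2
  | 2 => 6
  | (k+3) => cc (k+2) * ww (k+3)

lemma ww_pos {j : ℕ} (h : 3 ≤ j) : 0 < ww j := by unfold ww; split <;> omega

lemma cc_pos : ∀ k, 0 < cc k
  | 0 => one_pos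
  | 1 => by norm_num [cc]
  | 2 => by norm_num [cc]
  | (k+3) => Nat.mul_pos (cc_pos (k+2)) (ww_pos (by omega))

lemma cc_succ (j : ℕ) : cc (j+3) = cc (j+2) * ww (j+3) := rfl

lemma log2_lb : (0.6931471803 : ℝ) ≤ Real.log 2 := le_of_lt Real.log_two_gt_d9
lemma log2_ub : Real.log 2 ≤ (0.6931471808 : ℝ) := le_of_lt Real.log_two_lt_d9

lemma log_lb {x : ℝ} (q m : ℕ) (hq : 0 < q) (hx : 0 < x) (h : (2:ℝ)^m ≤ x^q) {c : ℝ}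
    (hc : c * q ≤ m * 0.6931471803) : c ≤ Real.log x := by
  have h1 : (m : ℝ) * Real.log 2 ≤ q * Real.log x := by
    have := Real.log_le_log (by positivity) h
    rwa [Real.log_pow, Real.log_pow] at this
  have h2 : (m:ℝ) * 0.6931471803 ≤ (m:ℝ) * Real.log 2 :=
    mul_le_mul_of_nonneg_left log2_lb (by positivity)
  have hq' : (0:ℝ) < q := by exact_mod_cast hq
  nlinarith

lemma log_ub {x : ℝ} (q m : ℕ) (hq : 0 < q) (hx : 0 < x) (h : x^q ≤ (2:ℝ)^m) {c : ℝ}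
    (hc : (m:ℝ) * 0.6931471808 ≤ c * q) : Real.log x ≤ c := by
  have h1 : (q : ℝ) * Real.log x ≤ m * Real.log 2 := by
    have := Real.log_le_log (by positivity) h
    rwa [Real.log_pow, Real.log_pow] at this
  have h2 : (m:ℝ) * Real.log 2 ≤ (m:ℝ) * 0.6931471808 :=
    mul_le_mul_of_nonneg_left log2_ub (by positivity)
  have hq' : (0:ℝ) < q := by exact_mod_cast hq
  nlinarith

lemma mono_step {k t T : ℝ} (hk : 1 ≤ k) (hkt : k ≤ t) (htT : t ≤ T)
    (h : k * Real.log t ≤ 1.4 * t) : k * Real.log T ≤ 1.4 * T := by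
  have ht : (0:ℝ) < t := lt_of_lt_of_le (by linarith) hkt
  have hT : (0:ℝ) < T := lt_of_lt_of_le ht htT
  have h2 : Real.log (T/t) ≤ T/t - 1 := Real.log_le_sub_one_of_pos (by positivity)
  rw [Real.log_div (ne_of_gt hT) (ne_of_gt ht)] at h2
  have h1 : Real.log T - Real.log t ≤ (T - t)/t := by
    have : T/t - 1 = (T-t)/t := by field_simp
    linarith
  have h3 : k * (Real.log T - Real.log t) ≤ k * ((T-t)/t) :=
    mul_le_mul_of_nonneg_left h1 (by linarith)
  have h4 : k * ((T-t)/t) ≤ T - t := by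
    have e : k * ((T-t)/t) = (T-t) * (k/t) := by ring
    have hkt1 : k/t ≤ 1 := (div_le_one ht).mpr hkt
    have : (T-t) * (k/t) ≤ (T-t) * 1 :=
      mul_le_mul_of_nonneg_left hkt1 (by linarith)
    linarith [e ▸ this]
  nlinarith

lemma base_core {k m1 m2 : ℕ} (hk : 1 ≤ k)
    (hcc : 2^m1 ≤ (cc k)^8)
    (hm2 : ((m1:ℝ)/8 * 0.6931471803)^64 ≤ 2^m2)
    (hkt : ((k:ℕ):ℝ) ≤ (m1:ℝ)/8 * 0.6931471803)
    (hmain : ((k:ℕ):ℝ) * ((m2:ℝ)/64 * 0.6931471808) ≤ 1.4 * ((m1:ℝ)/8 * 0.6931471803)) :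
    ∀ L : ℝ, Real.log (cc k) ≤ L → ((k:ℕ):ℝ) * Real.log L ≤ 1.4 * L := by
  intro L hL
  set t : ℝ := (m1:ℝ)/8 * 0.6931471803 with ht
  have hk1 : (1:ℝ) ≤ (k:ℝ) := by exact_mod_cast hk
  have htpos : (0:ℝ) < t := lt_of_lt_of_le (by linarith) hkt
  have hccR : (2:ℝ)^m1 ≤ ((cc k):ℝ)^8 := by exact_mod_cast hcc
  have h1 : t ≤ Real.log (cc k) := by
    refine log_lb 8 m1 (by norm_num) ?_ hccR (le_of_eq (by rw [ht]; ring))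
    exact_mod_cast cc_pos k
  have h2 : Real.log t ≤ (m2:ℝ)/64 * 0.6931471808 :=
    log_ub 64 m2 (by norm_num) htpos hm2 (le_of_eq (by ring))
  have h3 : (k:ℝ) * Real.log t ≤ 1.4 * t :=
    le_trans (mul_le_mul_of_nonneg_left h2 (by positivity)) hmain
  exact mono_step hk1 hkt (le_trans h1 hL) h3

lemma prime_mod6 {p : ℕ} (hp : p.Prime) (h5 : 5 ≤ p) : p % 6 = 1 ∨ p % 6 = 5 := by
  have h2 : ¬ (2 ∣ p) := by
    intro h
    have := (Nat.prime_dvd_prime_iff_eq Nat.prime_two hp).mp h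
    omega
  have h3 : ¬ (3 ∣ p) := by
    intro h
    have := (Nat.prime_dvd_prime_iff_eq Nat.prime_three hp).mp h
    omega
  omega

lemma card_primes_le {S : Finset ℕ} (hS : ∀ p ∈ S, p.Prime) {m : ℕ}
    (hm : ∀ p ∈ S, p ≤ m) : S.card ≤ (m - 4) / 3 + 3 := by
  classical
  set S5 := S.filter (fun q => 5 ≤ q) with hS5
  have hsub : S ⊆ S5 ∪ {2, 3} := by
    intro p hp
    rcases le_or_gt 5 p with h | h
    · exact Finset.mem_union_left _ (Finset.mem_filter.mpr ⟨hp, h⟩)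
    · have hpp := hS p hp
      have h2 := hpp.two_le
      have hne4 : p ≠ 4 := by intro e; rw [e] at hpp; norm_num at hpp
      have : p = 2 ∨ p = 3 := by omega
      apply Finset.mem_union_right
      rcases this with e | e <;> simp [e]
  have h1 : S.card ≤ S5.card + 2 :=
    calc S.card ≤ (S5 ∪ {2,3}).card := Finset.card_le_card hsub
    _ ≤ S5.card + ({2,3} : Finset ℕ).card := Finset.card_union_le _ _
    _ = S5.card + 2 := by norm_num
  have h2 : S5.card ≤ (m-4)/3 + 1 := by
    have hmap : ∀ q ∈ S5, (q-4)/3 ∈ Finset.range ((m-4)/3 + 1) := by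
      intro q hq
      rw [Finset.mem_range]
      have := hm q (Finset.mem_of_mem_filter q hq)
      omega
    have hinj : ∀ q ∈ S5, ∀ q' ∈ S5, (q-4)/3 = (q'-4)/3 → q = q' := by
      intro q hq q' hq'
      obtain ⟨hqS, hq5⟩ := Finset.mem_filter.mp hq
      obtain ⟨hqS', hq5'⟩ := Finset.mem_filter.mp hq'
      have m1 := prime_mod6 (hS q hqS) hq5
      have m2 := prime_mod6 (hS q' hqS') hq5'
      omega
    have := Finset.card_le_card_of_injOn _ hmap hinj
    simpa using this
  omega

lemma cc_le_prod : ∀ (n : ℕ) (S : Finset ℕ), S.card = n → (∀ p ∈ S, p.Prime) →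
    cc n ≤ ∏ p ∈ S, p := by
  intro n
  induction n with
  | zero => intro S hc _; rw [Finset.card_eq_zero.mp hc]; simp [cc]
  | succ n ih =>
    intro S hc hS
    have hne : S.Nonempty := Finset.card_pos.mp (by omega)
    set m := S.max' hne with hmdef
    have hmS : m ∈ S := S.max'_mem hne
    have hmax : ∀ p ∈ S, p ≤ m := fun p hp => S.le_max' p hp
    have hmp : m.Prime := hS m hmS
    have hprod : ∏ p ∈ S, p = m * ∏ p ∈ S.erase m, p := (Finset.mul_prod_erase S _ hmS).symm
    have hcard : (S.erase m).card = n := by rw [Finset.card_erase_of_mem hmS, hc]; omega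
    have hrec : cc n ≤ ∏ p ∈ S.erase m, p :=
      ih _ hcard (fun p hp => hS p (Finset.mem_of_mem_erase hp))
    have key : cc (n+1) ≤ m * cc n := by
      match n with
      | 0 => simpa [cc] using hmp.two_le
      | 1 =>
        have hne' : (S.erase m).Nonempty := Finset.card_pos.mp (by omega)
        obtain ⟨q, hq⟩ := hne'
        have hq2 := (hS q (Finset.mem_of_mem_erase hq)).two_le
        have hqm : q ≤ m := hmax q (Finset.mem_of_mem_erase hq)
        have hqne : q ≠ m := Finset.ne_of_mem_erase hq
        have : 3 ≤ m := by omega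
        show cc 2 ≤ m * cc 1
        simp only [cc]
        omega
      | Nat.succ (Nat.succ n') =>
        have hm5 : 5 ≤ m := by
          by_contra hlt
          push_neg at hlt
          have hsub : S ⊆ {2, 3} := by
            intro p hp
            have hpp := hS p hp
            have h2 := hpp.two_le
            have hle := hmax p hp
            have hne4 : p ≠ 4 := by intro e; rw [e] at hpp; norm_num at hpp
            have : p = 2 ∨ p = 3 := by omega
            rcases this with e | e <;> simp [e]
          have := Finset.card_le_card hsub
          rw [hc] at this
          have h23 : ({2,3} : Finset ℕ).card = 2 := rfl
          omega
        have hcount : S.card ≤ (m - 4) / 3 + 3 := card_primes_le hS hmax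
        rw [hc] at hcount
        have hmlb : 3 * n' + 4 ≤ m := by omega
        have hmodd : m % 2 = 1 := by
          have : ¬ (2 ∣ m) := by
            intro h
            have := (Nat.prime_dvd_prime_iff_eq Nat.prime_two hmp).mp h
            omega
          omega
        have hww : ww (n' + 3) ≤ m := by unfold ww; split <;> omega
        show cc (n' + 3) ≤ m * cc (n' + 2)
        rw [show cc (n'+3) = cc (n'+2) * ww (n'+3) from rfl, Nat.mul_comm]
        exact Nat.mul_le_mul_right _ hww
    calc cc (n+1) ≤ m * cc n := key
      _ ≤ m * ∏ p ∈ S.erase m, p := Nat.mul_le_mul_left m hrec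
      _ = ∏ p ∈ S, p := hprod.symm

lemma pow_helper {m1 c m2 : ℕ} (h : (m1*c)^64 ≤ 2^m2*80000000000^64) :
    ((m1:ℝ)/8*((c:ℝ)/10^10))^64 ≤ 2^m2 := by
  have h' : (((m1*c)^64 : ℕ):ℝ) ≤ ((2^m2*80000000000^64 : ℕ):ℝ) := by exact_mod_cast h
  have e : (m1:ℝ)/8*((c:ℝ)/10^10) = ((m1:ℝ)*c)/80000000000 := by ring
  rw [e, div_pow, div_le_iff₀ (by positivity)]
  push_cast at h'
  linarith

set_option maxHeartbeats 1000000 in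
lemma tail : ∀ k : ℕ, 55 ≤ k →
    0.95 * (k:ℝ) * Real.log (k:ℝ) ≤ Real.log (cc k) ∧
    Real.log (cc k) ≤ (k:ℝ) * Real.log (3*(k:ℝ)) ∧
    (k:ℝ) * Real.log (Real.log (cc k)) ≤ 1.4 * Real.log (cc k) := by
  intro k hk
  induction k, hk using Nat.le_induction with
  | base =>
    have hccv : cc 55 = 4370254878798720647888199940605241608063954348584271986900338746823905285026714175414440917968750 := rfl
    have hccpos : (0:ℝ) < ((cc 55 : ℕ) : ℝ) := by exact_mod_cast cc_pos 55
    have tlb : (2568:ℝ)/8*0.6931471803 ≤ Real.log (cc 55) := by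
      refine log_lb 8 2568 (by norm_num) hccpos ?_ (by norm_num)
      exact_mod_cast (by decide +kernel : 2^2568 ≤ (cc 55)^8)
    have tub : Real.log (cc 55) ≤ (2569:ℝ)/8*0.6931471808 := by
      refine log_ub 8 2569 (by norm_num) hccpos ?_ (by norm_num)
      exact_mod_cast (by decide +kernel : (cc 55)^8 ≤ 2^2569)
    have l55ub : Real.log ((55:ℕ):ℝ) ≤ (47:ℝ)/8*0.6931471808 := by
      push_cast
      exact log_ub 8 47 (by norm_num) (by norm_num) (by norm_num) (by norm_num)
    have l165lb : (58:ℝ)/8*0.6931471803 ≤ Real.log (3*((55:ℕ):ℝ)) := by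
      push_cast
      refine log_lb 8 58 (by norm_num) (by norm_num) ?_ (by norm_num)
      norm_num
    refine ⟨?_, ?_, ?_⟩
    · have : 0.95 * ((55:ℕ):ℝ) * Real.log ((55:ℕ):ℝ) ≤ 0.95 * 55 * ((47:ℝ)/8*0.6931471808) := by
        push_cast at l55ub ⊢
        nlinarith [l55ub]
      calc 0.95 * ((55:ℕ):ℝ) * Real.log ((55:ℕ):ℝ) ≤ 0.95 * 55 * ((47:ℝ)/8*0.6931471808) := this
        _ ≤ (2568:ℝ)/8*0.6931471803 := by norm_num
        _ ≤ Real.log (cc 55) := tlb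
    · calc Real.log (cc 55) ≤ (2569:ℝ)/8*0.6931471808 := tub
        _ ≤ ((55:ℕ):ℝ) * ((58:ℝ)/8*0.6931471803) := by push_cast; norm_num
        _ ≤ ((55:ℕ):ℝ) * Real.log (3*((55:ℕ):ℝ)) := by
            refine mul_le_mul_of_nonneg_left l165lb (by positivity)
    · have hTpos : (0:ℝ) < Real.log (cc 55) := lt_of_lt_of_le (by norm_num) tlb
      have hlogT : Real.log (Real.log (cc 55)) ≤ (500:ℝ)/64*0.6931471808 := by
        have h1 : Real.log (Real.log (cc 55)) ≤ Real.log ((2569:ℝ)/8*0.6931471808) :=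
          Real.log_le_log hTpos tub
        have h2 : Real.log ((2569:ℝ)/8*0.6931471808) ≤ (500:ℝ)/64*0.6931471808 :=
          log_ub 64 500 (by norm_num) (by norm_num)
            (by convert pow_helper (m1 := 2569) (c := 6931471808) (m2 := 500) (by decide +kernel) using 2; norm_num)
            (by norm_num)
        linarith
      have : ((55:ℕ):ℝ) * Real.log (Real.log (cc 55)) ≤ 55 * ((500:ℝ)/64*0.6931471808) := by
        push_cast
        nlinarith [hlogT]
      calc ((55:ℕ):ℝ) * Real.log (Real.log (cc 55)) ≤ 55 * ((500:ℝ)/64*0.6931471808) := this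
        _ ≤ 1.4 * ((2568:ℝ)/8*0.6931471803) := by norm_num
        _ ≤ 1.4 * Real.log (cc 55) := by linarith
  | succ k hk ih =>
    obtain ⟨ih1, ih2, ih3⟩ := ih
    have hcc1 : cc (k+1) = cc k * ww (k+1) := by
      obtain ⟨j, rfl⟩ : ∃ j, k = j + 3 := ⟨k - 3, by omega⟩
      rw [show j+3+1 = (j+1)+3 from by omega, show j+3 = (j+1)+2 from by omega]
      exact cc_succ (j+1)
    set T := Real.log ((cc k : ℕ) : ℝ) with hT
    set x := Real.log ((k:ℕ):ℝ) with hxdef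
    have hk55 : (55:ℝ) ≤ ((k:ℕ):ℝ) := by exact_mod_cast hk
    have hkpos : (0:ℝ) < ((k:ℕ):ℝ) := by linarith
    have hx : (4.007:ℝ) ≤ x := by
      have h55 : (4.007:ℝ) ≤ Real.log 55 :=
        log_lb 32 185 (by norm_num) (by norm_num) (by norm_num) (by norm_num)
      have h2 : Real.log 55 ≤ x := Real.log_le_log (by norm_num) hk55
      linarith
    have hxpos : (0:ℝ) < x := by linarith
    have hwnat1 : 29 * k ≤ 10 * ww (k+1) := by unfold ww; split <;> omega
    have hwnat2 : 10 * ww (k+1) ≤ 31 * k := by unfold ww; split <;> omega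
    have hwnat3 : ww (k+1) ≤ 3 * (k+1) := by unfold ww; split <;> omega
    have hw1 : (1:ℝ) ≤ ((ww (k+1) : ℕ) : ℝ) := by
      have := ww_pos (j := k+1) (by omega); exact_mod_cast this
    have hwlb : (2.9:ℝ) * ((k:ℕ):ℝ) ≤ ((ww (k+1) : ℕ):ℝ) := by
      have h' : (29:ℝ) * ((k:ℕ):ℝ) ≤ 10 * ((ww (k+1):ℕ):ℝ) := by exact_mod_cast hwnat1
      linarith
    have hwub : ((ww (k+1) : ℕ):ℝ) ≤ 3.1 * ((k:ℕ):ℝ) := by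
      have h' : (10:ℝ) * ((ww (k+1):ℕ):ℝ) ≤ 31 * ((k:ℕ):ℝ) := by exact_mod_cast hwnat2
      linarith
    set δ := Real.log ((ww (k+1) : ℕ) : ℝ) with hδdef
    have hδ0 : 0 ≤ δ := Real.log_nonneg hw1
    have hl29 : (1.06:ℝ) ≤ Real.log 2.9 :=
      log_lb 64 98 (by norm_num) (by norm_num) (by norm_num) (by norm_num)
    have hl31 : Real.log 3.1 ≤ 1.14 :=
      log_ub 64 105 (by norm_num) (by norm_num) (by norm_num) (by norm_num)
    have hdlb : x + 1.06 ≤ δ := by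
      have h1 : Real.log (2.9 * ((k:ℕ):ℝ)) ≤ δ := Real.log_le_log (by positivity) hwlb
      rw [Real.log_mul (by norm_num) (ne_of_gt hkpos)] at h1
      linarith
    have hdub : δ ≤ x + 1.14 := by
      have h1 : δ ≤ Real.log (3.1 * ((k:ℕ):ℝ)) :=
        Real.log_le_log (by linarith) hwub
      rw [Real.log_mul (by norm_num) (ne_of_gt hkpos)] at h1
      linarith
    have hTlb : 0.95 * ((k:ℕ):ℝ) * x ≤ T := ih1
    have hTpos : (0:ℝ) < T := by
      have h9 : (0:ℝ) < 0.95*((k:ℕ):ℝ)*x := by positivity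
      linarith
    have hTδ : Real.log ((cc (k+1) : ℕ) : ℝ) = T + δ := by
      rw [hcc1]
      push_cast
      rw [Real.log_mul (by exact_mod_cast (cc_pos k).ne') (by linarith)]
    have hlk1 : Real.log (((k:ℕ):ℝ)+1) ≤ x + 1/((k:ℕ):ℝ) := by
      have h2 : Real.log ((((k:ℕ):ℝ)+1)/((k:ℕ):ℝ)) ≤ (((k:ℕ):ℝ)+1)/((k:ℕ):ℝ) - 1 :=
        Real.log_le_sub_one_of_pos (by positivity)
      rw [Real.log_div (by positivity) (ne_of_gt hkpos)] at h2
      have h3 : (((k:ℕ):ℝ)+1)/((k:ℕ):ℝ) - 1 = 1/((k:ℕ):ℝ) := by field_simp; ring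
      linarith
    have hk1k : (1:ℝ)/((k:ℕ):ℝ) ≤ 0.0182 := by
      rw [div_le_iff₀ hkpos]; linarith
    -- U invariant at k+1
    have h3k : Real.log (3*((k:ℕ):ℝ)) ≤ Real.log (3*(((k:ℕ):ℝ)+1)) :=
      Real.log_le_log (by positivity) (by linarith)
    have hwle : ((ww (k+1):ℕ):ℝ) ≤ 3*(((k:ℕ):ℝ)+1) := by
      have h' : ((ww (k+1):ℕ):ℝ) ≤ ((3*(k+1) : ℕ):ℝ) := by exact_mod_cast hwnat3
      push_cast at h'
      linarith
    have hδle : δ ≤ Real.log (3*(((k:ℕ):ℝ)+1)) := Real.log_le_log (by linarith) hwle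
    have hTle : T ≤ ((k:ℕ):ℝ) * Real.log (3*(((k:ℕ):ℝ)+1)) :=
      le_trans ih2 (mul_le_mul_of_nonneg_left h3k (by positivity))
    have hU : T + δ ≤ (((k:ℕ):ℝ)+1) * Real.log (3*(((k:ℕ):ℝ)+1)) := by nlinarith [hTle, hδle]
    refine ⟨?_, ?_, ?_⟩
    · -- lower invariant
      push_cast
      rw [hTδ]
      have e1 : 0.95*(((k:ℕ):ℝ)+1)*Real.log (((k:ℕ):ℝ)+1) ≤ 0.95*(((k:ℕ):ℝ)+1)*(x+1/((k:ℕ):ℝ)) := by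
        apply mul_le_mul_of_nonneg_left hlk1 (by positivity)
      have e2 : 0.95*(((k:ℕ):ℝ)+1)*(x+1/((k:ℕ):ℝ)) =
          0.95*(((k:ℕ):ℝ)*x + x + 1 + 1/((k:ℕ):ℝ)) := by
        field_simp
        ring
      rw [e2] at e1
      linarith
    · -- upper invariant
      push_cast
      rw [hTδ]
      exact hU
    · -- main invariant
      push_cast
      rw [hTδ]
      have hstep : Real.log (T+δ) ≤ Real.log T + δ/T := by
        have h2 : Real.log ((T+δ)/T) ≤ (T+δ)/T - 1 := Real.log_le_sub_one_of_pos (by positivity)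
        rw [Real.log_div (by positivity) (ne_of_gt hTpos)] at h2
        have h3 : (T+δ)/T - 1 = δ/T := by field_simp; ring
        linarith
      have hdiv : ((k:ℕ):ℝ) * (δ/T) ≤ 1.3534 := by
        have h2 : (((k:ℕ):ℝ)*δ)/T ≤ (((k:ℕ):ℝ)*δ)/(0.95*((k:ℕ):ℝ)*x) := by
          gcongr
        have h3 : (((k:ℕ):ℝ)*δ)/(0.95*((k:ℕ):ℝ)*x) = δ/(0.95*x) := by
          rw [div_eq_div_iff (by positivity) (by positivity)]
          ring
        have h4 : δ/(0.95*x) ≤ 1.3534 := by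
          rw [div_le_iff₀ (by positivity)]
          nlinarith
        have h5 : ((k:ℕ):ℝ) * (δ/T) = (((k:ℕ):ℝ)*δ)/T := by ring
        rw [h5]
        linarith [h2, h3, h4]
      have hYpos : (0:ℝ) < Real.log (3*(((k:ℕ):ℝ)+1)) := Real.log_pos (by linarith)
      have hY : Real.log (3*(((k:ℕ):ℝ)+1)) ≤ x + 1.14 := by
        have h1 : Real.log (3*(((k:ℕ):ℝ)+1)) ≤ Real.log (3.1*((k:ℕ):ℝ)) :=
          Real.log_le_log (by positivity) (by linarith)
        rw [Real.log_mul (by norm_num) (ne_of_gt hkpos)] at h1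
        linarith
      have ha : Real.log (T+δ) ≤ Real.log ((((k:ℕ):ℝ)+1) * Real.log (3*(((k:ℕ):ℝ)+1))) :=
        Real.log_le_log (by positivity) hU
      rw [Real.log_mul (by positivity) (ne_of_gt hYpos)] at ha
      have hb : Real.log (Real.log (3*(((k:ℕ):ℝ)+1))) ≤ Real.log (x + 1.14) :=
        Real.log_le_log hYpos hY
      have hc : Real.log (x+1.14) ≤ 1.6463 + (x - 4.007)*0.1943 := by
        have h2 : Real.log ((x+1.14)/5.147) ≤ (x+1.14)/5.147 - 1 :=
          Real.log_le_sub_one_of_pos (by positivity)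
        rw [Real.log_div (by positivity) (by norm_num)] at h2
        have hl5 : Real.log 5.147 ≤ 1.6463 :=
          log_ub 64 152 (by norm_num) (by norm_num) (by norm_num) (by norm_num)
        have he : (x+1.14)/5.147 ≤ 1 + (x - 4.007)*0.1943 := by
          rw [div_le_iff₀ (by norm_num)]
          linarith
        linarith
      have hm1 : ((k:ℕ):ℝ)*Real.log (T+δ) ≤ ((k:ℕ):ℝ)*(Real.log T + δ/T) :=
        mul_le_mul_of_nonneg_left hstep (by positivity)
      have hm2 : ((k:ℕ):ℝ)*(Real.log T + δ/T) = ((k:ℕ):ℝ)*Real.log T + ((k:ℕ):ℝ)*(δ/T) := by ring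
      have hlog : Real.log (T+δ) ≤ (x + 0.0182) + (1.6463 + (x - 4.007)*0.1943) := by
        linarith
      linarith [ih3]

lemma base3 : ∀ L : ℝ, Real.log (cc 3) ≤ L → ((3:ℕ):ℝ) * Real.log L ≤ 1.4 * L :=
  base_core (k := 3) (m1 := 39) (m2 := 113) (by norm_num)
    (by rw [show cc 3 = 30 from rfl]; norm_num) (by norm_num) (by norm_num) (by norm_num)

lemma base4 : ∀ L : ℝ, Real.log (cc 4) ≤ L → ((4:ℕ):ℝ) * Real.log L ≤ 1.4 * L :=
  base_core (k := 4) (m1 := 61) (m2 := 154) (by norm_num)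
    (by rw [show cc 4 = 210 from rfl]; norm_num) (by norm_num) (by norm_num) (by norm_num)

lemma base5 : ∀ L : ℝ, Real.log (cc 5) ≤ L → ((5:ℕ):ℝ) * Real.log L ≤ 1.4 * L :=
  base_core (k := 5) (m1 := 89) (m2 := 189) (by norm_num)
    (by rw [show cc 5 = 2310 from rfl]; norm_num) (by norm_num) (by norm_num) (by norm_num)

lemma base6 : ∀ L : ℝ, Real.log (cc 6) ≤ L → ((6:ℕ):ℝ) * Real.log L ≤ 1.4 * L :=
  base_core (k := 6) (m1 := 118) (m2 := 215) (by norm_num)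
    (by rw [show cc 6 = 30030 from rfl]; norm_num) (by norm_num) (by norm_num) (by norm_num)

lemma base7 : ∀ L : ℝ, Real.log (cc 7) ≤ L → ((7:ℕ):ℝ) * Real.log L ≤ 1.4 * L :=
  base_core (k := 7) (m1 := 151) (m2 := 238) (by norm_num)
    (by rw [show cc 7 = 510510 from rfl]; norm_num) (by norm_num) (by norm_num) (by norm_num)

lemma base8 : ∀ L : ℝ, Real.log (cc 8) ≤ L → ((8:ℕ):ℝ) * Real.log L ≤ 1.4 * L :=
  base_core (k := 8) (m1 := 185) (m2 := 257) (by norm_num)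
    (by rw [show cc 8 = 9699690 from rfl]; norm_num)
    (by convert pow_helper (m1 := 185) (c := 6931471803) (m2 := 257) (by decide +kernel) using 2; norm_num) (by norm_num) (by norm_num)

lemma base9 : ∀ L : ℝ, Real.log (cc 9) ≤ L → ((9:ℕ):ℝ) * Real.log L ≤ 1.4 * L :=
  base_core (k := 9) (m1 := 221) (m2 := 273) (by norm_num)
    (by rw [show cc 9 = 223092870 from rfl]; norm_num)
    (by convert pow_helper (m1 := 221) (c := 6931471803) (m2 := 273) (by decide +kernel) using 2; norm_num) (by norm_num) (by norm_num)

lemma base10 : ∀ L : ℝ, Real.log (cc 10) ≤ L → ((10:ℕ):ℝ) * Real.log L ≤ 1.4 * L :=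
  base_core (k := 10) (m1 := 259) (m2 := 288) (by norm_num)
    (by rw [show cc 10 = 5577321750 from rfl]; decide +kernel)
    (by convert pow_helper (m1 := 259) (c := 6931471803) (m2 := 288) (by decide +kernel) using 2; norm_num) (by norm_num) (by norm_num)

lemma base11 : ∀ L : ℝ, Real.log (cc 11) ≤ L → ((11:ℕ):ℝ) * Real.log L ≤ 1.4 * L :=
  base_core (k := 11) (m1 := 297) (m2 := 300) (by norm_num)
    (by rw [show cc 11 = 161742330750 from rfl]; decide +kernel)
    (by convert pow_helper (m1 := 297) (c := 6931471803) (m2 := 300) (by decide +kernel) using 2; norm_num) (by norm_num) (by norm_num)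

lemma base12 : ∀ L : ℝ, Real.log (cc 12) ≤ L → ((12:ℕ):ℝ) * Real.log L ≤ 1.4 * L :=
  base_core (k := 12) (m1 := 337) (m2 := 312) (by norm_num)
    (by rw [show cc 12 = 5014012253250 from rfl]; decide +kernel)
    (by convert pow_helper (m1 := 337) (c := 6931471803) (m2 := 312) (by decide +kernel) using 2; norm_num) (by norm_num) (by norm_num)

lemma base13 : ∀ L : ℝ, Real.log (cc 13) ≤ L → ((13:ℕ):ℝ) * Real.log L ≤ 1.4 * L :=
  base_core (k := 13) (m1 := 378) (m2 := 323) (by norm_num)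
    (by rw [show cc 13 = 175490428863750 from rfl]; decide +kernel)
    (by convert pow_helper (m1 := 378) (c := 6931471803) (m2 := 323) (by decide +kernel) using 2; norm_num) (by norm_num) (by norm_num)

lemma base14 : ∀ L : ℝ, Real.log (cc 14) ≤ L → ((14:ℕ):ℝ) * Real.log L ≤ 1.4 * L :=
  base_core (k := 14) (m1 := 420) (m2 := 332) (by norm_num)
    (by rw [show cc 14 = 6493145867958750 from rfl]; decide +kernel)
    (by convert pow_helper (m1 := 420) (c := 6931471803) (m2 := 332) (by decide +kernel) using 2; norm_num) (by norm_num) (by norm_num)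

lemma base15 : ∀ L : ℝ, Real.log (cc 15) ≤ L → ((15:ℕ):ℝ) * Real.log L ≤ 1.4 * L :=
  base_core (k := 15) (m1 := 463) (m2 := 341) (by norm_num)
    (by rw [show cc 15 = 266218980586308750 from rfl]; decide +kernel)
    (by convert pow_helper (m1 := 463) (c := 6931471803) (m2 := 341) (by decide +kernel) using 2; norm_num) (by norm_num) (by norm_num)

lemma base16 : ∀ L : ℝ, Real.log (cc 16) ≤ L → ((16:ℕ):ℝ) * Real.log L ≤ 1.4 * L :=
  base_core (k := 16) (m1 := 506) (m2 := 350) (by norm_num)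
    (by rw [show cc 16 = 11447416165211276250 from rfl]; decide +kernel)
    (by convert pow_helper (m1 := 506) (c := 6931471803) (m2 := 350) (by decide +kernel) using 2; norm_num) (by norm_num) (by norm_num)

lemma base17 : ∀ L : ℝ, Real.log (cc 17) ≤ L → ((17:ℕ):ℝ) * Real.log L ≤ 1.4 * L :=
  base_core (k := 17) (m1 := 550) (m2 := 357) (by norm_num)
    (by rw [show cc 17 = 538028559764929983750 from rfl]; decide +kernel)
    (by convert pow_helper (m1 := 550) (c := 6931471803) (m2 := 357) (by decide +kernel) using 2; norm_num) (by norm_num) (by norm_num)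

lemma base18 : ∀ L : ℝ, Real.log (cc 18) ≤ L → ((18:ℕ):ℝ) * Real.log L ≤ 1.4 * L :=
  base_core (k := 18) (m1 := 595) (m2 := 365) (by norm_num)
    (by rw [show cc 18 = 26363399428481569203750 from rfl]; decide +kernel)
    (by convert pow_helper (m1 := 595) (c := 6931471803) (m2 := 365) (by decide +kernel) using 2; norm_num) (by norm_num) (by norm_num)

lemma base19 : ∀ L : ℝ, Real.log (cc 19) ≤ L → ((19:ℕ):ℝ) * Real.log L ≤ 1.4 * L :=
  base_core (k := 19) (m1 := 641) (m2 := 371) (by norm_num)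
    (by rw [show cc 19 = 1397260169709523167798750 from rfl]; decide +kernel)
    (by convert pow_helper (m1 := 641) (c := 6931471803) (m2 := 371) (by decide +kernel) using 2; norm_num) (by norm_num) (by norm_num)

lemma base20 : ∀ L : ℝ, Real.log (cc 20) ≤ L → ((20:ℕ):ℝ) * Real.log L ≤ 1.4 * L :=
  base_core (k := 20) (m1 := 687) (m2 := 378) (by norm_num)
    (by rw [show cc 20 = 76849309334023774228931250 from rfl]; decide +kernel)
    (by convert pow_helper (m1 := 687) (c := 6931471803) (m2 := 378) (by decide +kernel) using 2; norm_num) (by norm_num) (by norm_num)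

lemma base21 : ∀ L : ℝ, Real.log (cc 21) ≤ L → ((21:ℕ):ℝ) * Real.log L ≤ 1.4 * L :=
  base_core (k := 21) (m1 := 734) (m2 := 384) (by norm_num)
    (by rw [show cc 21 = 4534109250707402679506943750 from rfl]; decide +kernel)
    (by convert pow_helper (m1 := 734) (c := 6931471803) (m2 := 384) (by decide +kernel) using 2; norm_num) (by norm_num) (by norm_num)

lemma base22 : ∀ L : ℝ, Real.log (cc 22) ≤ L → ((22:ℕ):ℝ) * Real.log L ≤ 1.4 * L :=
  base_core (k := 22) (m1 := 782) (m2 := 390) (by norm_num)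
    (by rw [show cc 22 = 276580664293151563449923568750 from rfl]; decide +kernel)
    (by convert pow_helper (m1 := 782) (c := 6931471803) (m2 := 390) (by decide +kernel) using 2; norm_num) (by norm_num) (by norm_num)

lemma base23 : ∀ L : ℝ, Real.log (cc 23) ≤ L → ((23:ℕ):ℝ) * Real.log L ≤ 1.4 * L :=
  base_core (k := 23) (m1 := 830) (m2 := 395) (by norm_num)
    (by rw [show cc 23 = 17977743179054851624245031968750 from rfl]; decide +kernel)
    (by convert pow_helper (m1 := 830) (c := 6931471803) (m2 := 395) (by decide +kernel) using 2; norm_num) (by norm_num) (by norm_num)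

lemma base24 : ∀ L : ℝ, Real.log (cc 24) ≤ L → ((24:ℕ):ℝ) * Real.log L ≤ 1.4 * L :=
  base_core (k := 24) (m1 := 879) (m2 := 401) (by norm_num)
    (by rw [show cc 24 = 1204508792996675058824417141906250 from rfl]; decide +kernel)
    (by convert pow_helper (m1 := 879) (c := 6931471803) (m2 := 401) (by decide +kernel) using 2; norm_num) (by norm_num) (by norm_num)

lemma base25 : ∀ L : ℝ, Real.log (cc 25) ≤ L → ((25:ℕ):ℝ) * Real.log L ≤ 1.4 * L :=
  base_core (k := 25) (m1 := 928) (m2 := 406) (by norm_num)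
    (by rw [show cc 25 = 85520124302763929176533617075343750 from rfl]; decide +kernel)
    (by convert pow_helper (m1 := 928) (c := 6931471803) (m2 := 406) (by decide +kernel) using 2; norm_num) (by norm_num) (by norm_num)

lemma base26 : ∀ L : ℝ, Real.log (cc 26) ≤ L → ((26:ℕ):ℝ) * Real.log L ≤ 1.4 * L :=
  base_core (k := 26) (m1 := 977) (m2 := 410) (by norm_num)
    (by rw [show cc 26 = 6242969074101766829886954046500093750 from rfl]; decide +kernel)
    (by convert pow_helper (m1 := 977) (c := 6931471803) (m2 := 410) (by decide +kernel) using 2; norm_num) (by norm_num) (by norm_num)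

lemma base27 : ∀ L : ℝ, Real.log (cc 27) ≤ L → ((27:ℕ):ℝ) * Real.log L ≤ 1.4 * L :=
  base_core (k := 27) (m1 := 1027) (m2 := 415) (by norm_num)
    (by rw [show cc 27 = 480708618705836045901295461580507218750 from rfl]; decide +kernel)
    (by convert pow_helper (m1 := 1027) (c := 6931471803) (m2 := 415) (by decide +kernel) using 2; norm_num) (by norm_num) (by norm_num)

lemma base28 : ∀ L : ℝ, Real.log (cc 28) ≤ L → ((28:ℕ):ℝ) * Real.log L ≤ 1.4 * L :=
  base_core (k := 28) (m1 := 1078) (m2 := 419) (by norm_num)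
    (by rw [show cc 28 = 37975980877761047626202341464860070281250 from rfl]; decide +kernel)
    (by convert pow_helper (m1 := 1078) (c := 6931471803) (m2 := 419) (by decide +kernel) using 2; norm_num) (by norm_num) (by norm_num)

lemma base29 : ∀ L : ℝ, Real.log (cc 29) ≤ L → ((29:ℕ):ℝ) * Real.log L ≤ 1.4 * L :=
  base_core (k := 29) (m1 := 1129) (m2 := 424) (by norm_num)
    (by rw [show cc 29 = 3152006412854166952974794341583385833343750 from rfl]; decide +kernel)
    (by convert pow_helper (m1 := 1129) (c := 6931471803) (m2 := 424) (by decide +kernel) using 2; norm_num) (by norm_num) (by norm_num)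

lemma base30 : ∀ L : ℝ, Real.log (cc 30) ≤ L → ((30:ℕ):ℝ) * Real.log L ≤ 1.4 * L :=
  base_core (k := 30) (m1 := 1180) (m2 := 428) (by norm_num)
    (by rw [show cc 30 = 267920545092604191002857519034587795834218750 from rfl]; decide +kernel)
    (by convert pow_helper (m1 := 1180) (c := 6931471803) (m2 := 428) (by decide +kernel) using 2; norm_num) (by norm_num) (by norm_num)

lemma base31 : ∀ L : ℝ, Real.log (cc 31) ≤ L → ((31:ℕ):ℝ) * Real.log L ≤ 1.4 * L :=
  base_core (k := 31) (m1 := 1232) (m2 := 432) (by norm_num)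
    (by rw [show cc 31 = 23844928513241772999254319194078313829245468750 from rfl]; decide +kernel)
    (by convert pow_helper (m1 := 1232) (c := 6931471803) (m2 := 432) (by decide +kernel) using 2; norm_num) (by norm_num) (by norm_num)

lemma base32 : ∀ L : ℝ, Real.log (cc 32) ≤ L → ((32:ℕ):ℝ) * Real.log L ≤ 1.4 * L :=
  base_core (k := 32) (m1 := 1284) (m2 := 436) (by norm_num)
    (by rw [show cc 32 = 2169888494705001342932143046661126558461337656250 from rfl]; decide +kernel)
    (by convert pow_helper (m1 := 1284) (c := 6931471803) (m2 := 436) (by decide +kernel) using 2; norm_num) (by norm_num) (by norm_num)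

lemma base33 : ∀ L : ℝ, Real.log (cc 33) ≤ L → ((33:ℕ):ℝ) * Real.log L ≤ 1.4 * L :=
  base_core (k := 33) (m1 := 1337) (m2 := 439) (by norm_num)
    (by rw [show cc 33 = 206139406996975127578553589432807023053827077343750 from rfl]; decide +kernel)
    (by convert pow_helper (m1 := 1337) (c := 6931471803) (m2 := 439) (by decide +kernel) using 2; norm_num) (by norm_num) (by norm_num)

lemma base34 : ∀ L : ℝ, Real.log (cc 34) ≤ L → ((34:ℕ):ℝ) * Real.log L ≤ 1.4 * L :=
  base_core (k := 34) (m1 := 1389) (m2 := 443) (by norm_num)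
    (by rw [show cc 34 = 19995522478706587375119698174982281236221226502343750 from rfl]; decide +kernel)
    (by convert pow_helper (m1 := 1389) (c := 6931471803) (m2 := 443) (by decide +kernel) using 2; norm_num) (by norm_num) (by norm_num)

lemma base35 : ∀ L : ℝ, Real.log (cc 35) ≤ L → ((35:ℕ):ℝ) * Real.log L ≤ 1.4 * L :=
  base_core (k := 35) (m1 := 1443) (m2 := 446) (by norm_num)
    (by rw [show cc 35 = 2019547770349365324887089515673210404858343876736718750 from rfl]; decide +kernel)
    (by convert pow_helper (m1 := 1443) (c := 6931471803) (m2 := 446) (by decide +kernel) using 2; norm_num) (by norm_num) (by norm_num)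

lemma base36 : ∀ L : ℝ, Real.log (cc 36) ≤ L → ((36:ℕ):ℝ) * Real.log L ≤ 1.4 * L :=
  base_core (k := 36) (m1 := 1496) (m2 := 450) (by norm_num)
    (by rw [show cc 36 = 208013420345984628463370220114340671700409419303882031250 from rfl]; decide +kernel)
    (by convert pow_helper (m1 := 1496) (c := 6931471803) (m2 := 450) (by decide +kernel) using 2; norm_num) (by norm_num) (by norm_num)

lemma base37 : ∀ L : ℝ, Real.log (cc 37) ≤ L → ((37:ℕ):ℝ) * Real.log L ≤ 1.4 * L :=
  base_core (k := 37) (m1 := 1550) (m2 := 453) (by norm_num)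
    (by rw [show cc 37 = 22257435977020355245580613552234451871943807865515377343750 from rfl]; decide +kernel)
    (by convert pow_helper (m1 := 1550) (c := 6931471803) (m2 := 453) (by decide +kernel) using 2; norm_num) (by norm_num) (by norm_num)

lemma base38 : ∀ L : ℝ, Real.log (cc 38) ≤ L → ((38:ℕ):ℝ) * Real.log L ≤ 1.4 * L :=
  base_core (k := 38) (m1 := 1604) (m2 := 456) (by norm_num)
    (by rw [show cc 38 = 2426060521495218721768286877193555254041875057341176130468750 from rfl]; decide +kernel)
    (by convert pow_helper (m1 := 1604) (c := 6931471803) (m2 := 456) (by decide +kernel) using 2; norm_num) (by norm_num) (by norm_num)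

lemma base39 : ∀ L : ℝ, Real.log (cc 39) ≤ L → ((39:ℕ):ℝ) * Real.log L ≤ 1.4 * L :=
  base_core (k := 39) (m1 := 1659) (m2 := 459) (by norm_num)
    (by rw [show cc 39 = 274144838928959715559816417122871743706731881479552902742968750 from rfl]; decide +kernel)
    (by convert pow_helper (m1 := 1659) (c := 6931471803) (m2 := 459) (by decide +kernel) using 2; norm_num) (by norm_num) (by norm_num)

lemma base40 : ∀ L : ℝ, Real.log (cc 40) ≤ L → ((40:ℕ):ℝ) * Real.log L ≤ 1.4 * L :=
  base_core (k := 40) (m1 := 1714) (m2 := 462) (by norm_num)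
    (by rw [show cc 40 = 31526656476830367289378887969130250526274166370148583815441406250 from rfl]; decide +kernel)
    (by convert pow_helper (m1 := 1714) (c := 6931471803) (m2 := 462) (by decide +kernel) using 2; norm_num) (by norm_num) (by norm_num)

lemma base41 : ∀ L : ℝ, Real.log (cc 41) ≤ L → ((41:ℕ):ℝ) * Real.log L ≤ 1.4 * L :=
  base_core (k := 41) (m1 := 1769) (m2 := 465) (by norm_num)
    (by rw [show cc 41 = 3751672120742813707436087668326499812626625798047681474037527343750 from rfl]; decide +kernel)
    (by convert pow_helper (m1 := 1769) (c := 6931471803) (m2 := 465) (by decide +kernel) using 2; norm_num) (by norm_num) (by norm_num)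

lemma base42 : ∀ L : ℝ, Real.log (cc 42) ≤ L → ((42:ℕ):ℝ) * Real.log L ≤ 1.4 * L :=
  base_core (k := 42) (m1 := 1824) (m2 := 468) (by norm_num)
    (by rw [show cc 42 = 453952326609880458599766607867506477327821721563769458358540808593750 from rfl]; decide +kernel)
    (by convert pow_helper (m1 := 1824) (c := 6931471803) (m2 := 468) (by decide +kernel) using 2; norm_num) (by norm_num) (by norm_num)

lemma base43 : ∀ L : ℝ, Real.log (cc 43) ≤ L → ((43:ℕ):ℝ) * Real.log L ≤ 1.4 * L :=
  base_core (k := 43) (m1 := 1880) (m2 := 471) (by norm_num)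
    (by rw [show cc 43 = 56744040826235057324970825983438309665977715195471182294817601074218750 from rfl]; decide +kernel)
    (by convert pow_helper (m1 := 1880) (c := 6931471803) (m2 := 471) (by decide +kernel) using 2; norm_num) (by norm_num) (by norm_num)

lemma base44 : ∀ L : ℝ, Real.log (cc 44) ≤ L → ((44:ℕ):ℝ) * Real.log L ≤ 1.4 * L :=
  base_core (k := 44) (m1 := 1936) (m2 := 473) (by norm_num)
    (by rw [show cc 44 = 7206493184931852280271294899896665327579169829824840151441835336425781250 from rfl]; decide +kernel)
    (by convert pow_helper (m1 := 1936) (c := 6931471803) (m2 := 473) (by decide +kernel) using 2; norm_num) (by norm_num) (by norm_num)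

lemma base45 : ∀ L : ℝ, Real.log (cc 45) ≤ L → ((45:ℕ):ℝ) * Real.log L ≤ 1.4 * L :=
  base_core (k := 45) (m1 := 1992) (m2 := 476) (by norm_num)
    (by rw [show cc 45 = 944050607226072648715539631886463157912871247707054059838880429071777343750 from rfl]; decide +kernel)
    (by convert pow_helper (m1 := 1992) (c := 6931471803) (m2 := 476) (by decide +kernel) using 2; norm_num) (by norm_num) (by norm_num)

lemma base46 : ∀ L : ℝ, Real.log (cc 46) ≤ L → ((46:ℕ):ℝ) * Real.log L ≤ 1.4 * L :=
  base_core (k := 46) (m1 := 2048) (m2 := 479) (by norm_num)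
    (by rw [show cc 46 = 125558730761067662279166771040899600002411875945038189958571097066546386718750 from rfl]; decide +kernel)
    (by convert pow_helper (m1 := 2048) (c := 6931471803) (m2 := 479) (by decide +kernel) using 2; norm_num) (by norm_num) (by norm_num)

lemma base47 : ∀ L : ℝ, Real.log (cc 47) ≤ L → ((47:ℕ):ℝ) * Real.log L ≤ 1.4 * L :=
  base_core (k := 47) (m1 := 2105) (m2 := 481) (by norm_num)
    (by rw [show cc 47 = 17201546114266269732245847632603245200330427004470232024324240298116854980468750 from rfl]; decide +kernel)
    (by convert pow_helper (m1 := 2105) (c := 6931471803) (m2 := 481) (by decide +kernel) using 2; norm_num) (by norm_num) (by norm_num)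

lemma base48 : ∀ L : ℝ, Real.log (cc 48) ≤ L → ((48:ℕ):ℝ) * Real.log L ≤ 1.4 * L :=
  base_core (k := 48) (m1 := 2162) (m2 := 484) (by norm_num)
    (by rw [show cc 48 = 2391014909883011492782172820931851082845929353621362251381069401438242842285156250 from rfl]; decide +kernel)
    (by convert pow_helper (m1 := 2162) (c := 6931471803) (m2 := 484) (by decide +kernel) using 2; norm_num) (by norm_num) (by norm_num)

lemma base49 : ∀ L : ℝ, Real.log (cc 49) ≤ L → ((49:ℕ):ℝ) * Real.log L ≤ 1.4 * L :=
  base_core (k := 49) (m1 := 2219) (m2 := 486) (by norm_num)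
    (by rw [show cc 49 = 341915132113270643467850713393254704846967897567854801947492924405668726446777343750 from rfl]; decide +kernel)
    (by convert pow_helper (m1 := 2219) (c := 6931471803) (m2 := 486) (by decide +kernel) using 2; norm_num) (by norm_num) (by norm_num)

lemma base50 : ∀ L : ℝ, Real.log (cc 50) ≤ L → ((50:ℕ):ℝ) * Real.log L ≤ 1.4 * L :=
  base_core (k := 50) (m1 := 2277) (m2 := 488) (by norm_num)
    (by rw [show cc 50 = 49577694156424243302838353442021932202810345147338946282386474038821965334782714843750 from rfl]; decide +kernel)
    (by convert pow_helper (m1 := 2277) (c := 6931471803) (m2 := 488) (by decide +kernel) using 2; norm_num) (by norm_num) (by norm_num)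

lemma base51 : ∀ L : ℝ, Real.log (cc 51) ≤ L → ((51:ℕ):ℝ) * Real.log L ≤ 1.4 * L :=
  base_core (k := 51) (m1 := 2335) (m2 := 491) (by norm_num)
    (by rw [show cc 51 = 7387076429307212252122914662861267898218741426953502996075584631784472834882624511718750 from rfl]; decide +kernel)
    (by convert pow_helper (m1 := 2335) (c := 6931471803) (m2 := 491) (by decide +kernel) using 2; norm_num) (by norm_num) (by norm_num)

lemma base52 : ∀ L : ℝ, Real.log (cc 52) ≤ L → ((52:ℕ):ℝ) * Real.log L ≤ 1.4 * L :=
  base_core (k := 52) (m1 := 2393) (m2 := 493) (by norm_num)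
    (by rw [show cc 52 = 1115448540825389050070560114092051452631029955469978952407413279399455398067276301269531250 from rfl]; decide +kernel)
    (by convert pow_helper (m1 := 2393) (c := 6931471803) (m2 := 493) (by decide +kernel) using 2; norm_num) (by norm_num) (by norm_num)

lemma base53 : ∀ L : ℝ, Real.log (cc 53) ≤ L → ((53:ℕ):ℝ) * Real.log L ≤ 1.4 * L :=
  base_core (k := 53) (m1 := 2451) (m2 := 495) (by norm_num)
    (by rw [show cc 53 = 172894523827935302760936817684267975157809643097846737623149058306915586700427826696777343750 from rfl]; decide +kernel)
    (by convert pow_helper (m1 := 2451) (c := 6931471803) (m2 := 495) (by decide +kernel) using 2; norm_num) (by norm_num) (by norm_num)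

lemma base54 : ∀ L : ℝ, Real.log (cc 54) ≤ L → ((54:ℕ):ℝ) * Real.log L ≤ 1.4 * L :=
  base_core (k := 54) (m1 := 2509) (m2 := 497) (by norm_num)
    (by rw [show cc 54 = 27144440240985842533467080376430072099776113966361937806834402154185747111967168791394042968750 from rfl]; decide +kernel)
    (by convert pow_helper (m1 := 2509) (c := 6931471803) (m2 := 497) (by decide +kernel) using 2; norm_num) (by norm_num) (by norm_num)


lemma key (k : ℕ) (hk : 3 ≤ k) (L : ℝ) (hL : Real.log (cc k) ≤ L) :
    (k:ℝ) * Real.log L ≤ 1.4 * L := by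
  rcases lt_or_ge k 55 with h | h
  · interval_cases k
    · exact base3 L hL
    · exact base4 L hL
    · exact base5 L hL
    · exact base6 L hL
    · exact base7 L hL
    · exact base8 L hL
    · exact base9 L hL
    · exact base10 L hL
    · exact base11 L hL
    · exact base12 L hL
    · exact base13 L hL
    · exact base14 L hL
    · exact base15 L hL
    · exact base16 L hL
    · exact base17 L hL
    · exact base18 L hL
    · exact base19 L hL
    · exact base20 L hL
    · exact base21 L hL
    · exact base22 L hL
    · exact base23 L hL
    · exact base24 L hL
    · exact base25 L hL
    · exact base26 L hL
    · exact base27 L hL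
    · exact base28 L hL
    · exact base29 L hL
    · exact base30 L hL
    · exact base31 L hL
    · exact base32 L hL
    · exact base33 L hL
    · exact base34 L hL
    · exact base35 L hL
    · exact base36 L hL
    · exact base37 L hL
    · exact base38 L hL
    · exact base39 L hL
    · exact base40 L hL
    · exact base41 L hL
    · exact base42 L hL
    · exact base43 L hL
    · exact base44 L hL
    · exact base45 L hL
    · exact base46 L hL
    · exact base47 L hL
    · exact base48 L hL
    · exact base49 L hL
    · exact base50 L hL
    · exact base51 L hL
    · exact base52 L hL
    · exact base53 L hL
    · exact base54 L hL
  · obtain ⟨h1, _h2, h3⟩ := tail k h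
    have hk55 : (55:ℝ) ≤ (k:ℝ) := by exact_mod_cast h
    have hx : (4.007:ℝ) ≤ Real.log (k:ℝ) := by
      have h55 : (4.007:ℝ) ≤ Real.log 55 :=
        log_lb 32 185 (by norm_num) (by norm_num) (by norm_num) (by norm_num)
      have h2 : Real.log 55 ≤ Real.log (k:ℝ) := Real.log_le_log (by norm_num) hk55
      linarith
    have hkT : (k:ℝ) ≤ Real.log (cc k) := by nlinarith
    exact mono_step (by exact_mod_cast Nat.one_le_iff_ne_zero.mpr (by omega)) hkT hL h3

theorem omega_upper_bound (n : ℕ) (hn : n ≥ 3) :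
    (n.primeFactors.card : ℝ) ≤ 1.4 * Real.log n / Real.log (Real.log n) := by
  have hn0 : 0 < n := by omega
  set k := n.primeFactors.card with hkdef
  have hccn : cc k ≤ n := by
    calc cc k ≤ ∏ p ∈ n.primeFactors, p :=
          cc_le_prod k _ rfl (fun p hp => Nat.prime_of_mem_primeFactors hp)
    _ ≤ n := Nat.le_of_dvd hn0 (Nat.prod_primeFactors_dvd n)
  have hlog3 : (1.0397:ℝ) ≤ Real.log 3 :=
    log_lb 2 3 (by norm_num) (by norm_num) (by norm_num) (by norm_num)
  have hL3 : Real.log 3 ≤ Real.log (n:ℝ) :=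
    Real.log_le_log (by norm_num) (by exact_mod_cast hn)
  have hL1 : 1 < Real.log (n:ℝ) := by linarith
  have hpos : 0 < Real.log (Real.log (n:ℝ)) := Real.log_pos hL1
  rw [le_div_iff₀ hpos]
  rcases le_or_gt k 2 with h2 | h3
  · have hk2 : (k:ℝ) ≤ 2 := by exact_mod_cast h2
    have hlogL : 0 < Real.log (n:ℝ) := by linarith
    set L := Real.log (n:ℝ) with hLdef
    set s := Real.sqrt L with hsdef
    have hs0 : 0 < s := Real.sqrt_pos.mpr hlogL
    have hs2 : s^2 = L := Real.sq_sqrt (le_of_lt hlogL)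
    have hlogs : Real.log s ≤ s - 1 := Real.log_le_sub_one_of_pos hs0
    have hLs : Real.log L = 2 * Real.log s := by
      rw [hsdef, Real.log_sqrt (le_of_lt hlogL)]; ring
    have h14 : 2 * Real.log L ≤ 1.4 * L := by
      rw [hLs]
      nlinarith [sq_nonneg (s - 10/7)]
    have hlogLpos : 0 ≤ Real.log L := by positivity
    calc (k:ℝ) * Real.log L ≤ 2 * Real.log L := by nlinarith
    _ ≤ 1.4 * L := h14
  · have hcck : (0:ℝ) < ((cc k : ℕ):ℝ) := by exact_mod_cast cc_pos k
    have hle : Real.log (cc k) ≤ Real.log (n:ℝ) :=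
      Real.log_le_log hcck (by exact_mod_cast hccn)
    exact key k h3 (Real.log (n:ℝ)) hle
end

section
/- Let K be a number field, γ ∈ K^× not a root of unity, and u_k = γ^k − 1. Let 𝔭 be a prime ideal of the ring of integers of K that is a primitive divisor of u_n, i.e. ν_𝔭(u_n) ≥ 1 and ν_𝔭(u_k) = 0 for all 1 ≤ k < n. Then the absolute norm of 𝔭 satisfies N𝔭 ≡ 1 (mod n); in particular N𝔭 ≥ n + 1. -/
open IsDedekindDomain NumberField

set_option synthInstance.maxHeartbeats 1000000
set_option maxHeartbeats 1000000

lemma exists_denom_notMem {R : Type*} [CommRing R] [IsDedekindDomain R] {K : Type*} [Field K]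
    [Algebra R K] [IsFractionRing R K] (v : HeightOneSpectrum R) (x : K)
    (hx : v.valuation K x ≤ 1) :
    ∃ a b : R, b ∉ v.asIdeal ∧ x * algebraMap R K b = algebraMap R K a := by
  obtain ⟨⟨a₀, b₀⟩, rfl⟩ := IsLocalization.mk'_surjective (nonZeroDivisors R) x
  rw [v.valuation_of_mk', v.intValuation_apply, v.intValuation_apply] at hx
  have hb0 : v.intValuationDef (b₀ : R) ≠ 0 := v.intValuation_ne_zero' b₀
  have hle : v.intValuationDef a₀ ≤ v.intValuationDef (b₀ : R) := by
    rwa [div_le_one₀ (lt_of_le_of_ne zero_le' (Ne.symm hb0))] at hx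
  have hb1 : v.intValuationDef (b₀ : R) ≤ 1 := v.intValuation_le_one _
  obtain ⟨m, hm⟩ := WithZero.ne_zero_iff_exists.1 hb0
  have hm1 : Multiplicative.toAdd m ≤ 0 := by
    rw [← hm] at hb1
    exact Multiplicative.toAdd_le.2
      (WithZero.coe_le_coe.1 (le_of_le_of_eq hb1 WithZero.coe_one.symm))
  set e : ℕ := (-(Multiplicative.toAdd m)).toNat with he
  have hconv : -(e : ℤ) = Multiplicative.toAdd m := by omega
  have hme : m = Multiplicative.ofAdd (-(e : ℤ)) := by
    rw [hconv, ofAdd_toAdd]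
  have hbe : v.intValuationDef (b₀ : R) =
      ((Multiplicative.ofAdd (-(e : ℤ)) : Multiplicative ℤ) : WithZero (Multiplicative ℤ)) := by
    rw [← hm, hme]
  have hdvdb : v.asIdeal ^ e ∣ Ideal.span {(b₀ : R)} :=
    (v.intValuation_le_pow_iff_dvd _ e).1 (le_of_eq hbe)
  have hnd : ¬ v.asIdeal ^ (e + 1) ∣ Ideal.span {(b₀ : R)} := by
    intro h
    have h2 : v.intValuationDef (b₀ : R) ≤ ((Multiplicative.ofAdd (-((e + 1 : ℕ) : ℤ)) : Multiplicative ℤ) : WithZero (Multiplicative ℤ)) :=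
      (v.intValuation_le_pow_iff_dvd (b₀ : R) (e + 1)).2 h
    rw [hbe] at h2
    have := Multiplicative.ofAdd_le.1 (WithZero.coe_le_coe.1 h2)
    omega
  have hdvda : v.asIdeal ^ e ∣ Ideal.span {a₀} :=
    (v.intValuation_le_pow_iff_dvd _ e).1 (le_of_le_of_eq hle hbe)
  obtain ⟨J, hJ⟩ := hdvdb
  have hPJ : ¬ J ≤ v.asIdeal := by
    intro h
    exact hnd (by rw [hJ, pow_succ]; exact mul_dvd_mul_left _ (Ideal.dvd_iff_le.2 h))
  obtain ⟨b, hbJ, hbP⟩ := SetLike.not_le_iff_exists.1 hPJ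
  have hdvd : Ideal.span {(b₀ : R)} ∣ Ideal.span {a₀ * b} := by
    rw [← Ideal.span_singleton_mul_span_singleton, hJ]
    exact mul_dvd_mul hdvda (Ideal.dvd_iff_le.2 ((Ideal.span_singleton_le_iff_mem _).2 hbJ))
  obtain ⟨c, hc⟩ : (b₀ : R) ∣ a₀ * b :=
    Ideal.span_singleton_le_span_singleton.1 (Ideal.le_of_dvd hdvd)
  refine ⟨c, b, hbP, ?_⟩
  have hb₀ : algebraMap R K (b₀ : R) ≠ 0 :=
    IsFractionRing.to_map_ne_zero_of_mem_nonZeroDivisors b₀.2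
  apply mul_left_cancel₀ hb₀
  calc algebraMap R K (b₀ : R) * (IsLocalization.mk' K a₀ b₀ * algebraMap R K b)
      = (IsLocalization.mk' K a₀ b₀ * algebraMap R K (b₀ : R)) * algebraMap R K b := by ring
    _ = algebraMap R K a₀ * algebraMap R K b := by rw [IsLocalization.mk'_spec]
    _ = algebraMap R K (a₀ * b) := by rw [map_mul]
    _ = algebraMap R K ((b₀ : R) * c) := by rw [hc]
    _ = algebraMap R K (b₀ : R) * algebraMap R K c := by rw [map_mul]

theorem absNorm_primitive_divisor (K : Type*) [Field K] [NumberField K]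
    (γ : K) (hγ0 : γ ≠ 0) (hγ : ∀ k : ℕ, 0 < k → γ ^ k ≠ 1)
    (n : ℕ) (hn : 0 < n) (v : HeightOneSpectrum (𝓞 K))
    (hval : v.valuation K γ = 1)
    (hprim : v.valuation K (γ ^ n - 1) < 1)
    (hprim' : ∀ k : ℕ, 1 ≤ k → k < n → v.valuation K (γ ^ k - 1) = 1) :
    Ideal.absNorm v.asIdeal % n = 1 % n ∧ n + 1 ≤ Ideal.absNorm v.asIdeal := by
  obtain ⟨c, b, hbP, hcb⟩ := exists_denom_notMem v γ hval.le
  have hmem_iff : ∀ r : 𝓞 K, v.valuation K (algebraMap (𝓞 K) K r) < 1 ↔ r ∈ v.asIdeal := by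
    intro r
    rw [v.valuation_lt_one_iff_dvd, Ideal.dvd_span_singleton]
  have hbval : v.valuation K (algebraMap (𝓞 K) K b) = 1 :=
    le_antisymm (v.valuation_le_one b) (not_lt.1 fun h => hbP ((hmem_iff b).1 h))
  letI : Field (𝓞 K ⧸ v.asIdeal) := Ideal.Quotient.field _
  letI : Fintype (𝓞 K ⧸ v.asIdeal) := @Fintype.ofFinite _ (Ideal.finiteQuotientOfFreeOfNeBot _ v.ne_bot)
  letI : DecidableEq (𝓞 K ⧸ v.asIdeal) := Classical.decEq _
  set B : 𝓞 K ⧸ v.asIdeal := Ideal.Quotient.mk v.asIdeal b with hB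
  set C : 𝓞 K ⧸ v.asIdeal := Ideal.Quotient.mk v.asIdeal c with hC
  have hBne : B ≠ 0 := by
    rw [hB, Ne, Ideal.Quotient.eq_zero_iff_mem]; exact hbP
  set g : 𝓞 K ⧸ v.asIdeal := C * B⁻¹ with hg
  have key : ∀ k : ℕ, 0 < k → (g ^ k = 1 ↔ v.valuation K (γ ^ k - 1) < 1) := by
    intro k hk
    have hBk : B ^ k ≠ 0 := pow_ne_zero _ hBne
    have h1 : g ^ k = 1 ↔ C ^ k = B ^ k := by
      rw [hg, mul_pow, inv_pow, mul_inv_eq_one₀ hBk]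
    have h2 : C ^ k = B ^ k ↔ (c ^ k - b ^ k : 𝓞 K) ∈ v.asIdeal := by
      rw [hC, hB, ← map_pow, ← map_pow, ← sub_eq_zero, ← map_sub,
        Ideal.Quotient.eq_zero_iff_mem]
    have h3 : v.valuation K (algebraMap (𝓞 K) K (c ^ k - b ^ k)) =
        v.valuation K (γ ^ k - 1) := by
      have heq : algebraMap (𝓞 K) K (c ^ k - b ^ k) =
          (γ ^ k - 1) * (algebraMap (𝓞 K) K b) ^ k := by
        rw [map_sub, map_pow, map_pow, ← hcb]; ring
      rw [heq, map_mul, map_pow, hbval, one_pow, mul_one]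
    rw [h1, h2, ← hmem_iff, h3]
  have hgn : g ^ n = 1 := (key n hn).2 hprim
  have horder : orderOf g = n := by
    have hfin : IsOfFinOrder g := isOfFinOrder_iff_pow_eq_one.2 ⟨n, hn, hgn⟩
    have hpos : 0 < orderOf g := hfin.orderOf_pos
    have hdvd : orderOf g ∣ n := orderOf_dvd_of_pow_eq_one hgn
    rcases lt_or_eq_of_le (Nat.le_of_dvd hn hdvd) with hlt | heq
    · exfalso
      have h4 := (key (orderOf g) hpos).1 (pow_orderOf_eq_one g)
      rw [hprim' (orderOf g) hpos hlt] at h4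
      exact lt_irrefl _ h4
    · exact heq
  have hg0 : g ≠ 0 := by
    intro h
    rw [h, zero_pow hn.ne'] at hgn
    exact zero_ne_one hgn
  have hdvdcard : n ∣ Fintype.card (𝓞 K ⧸ v.asIdeal) - 1 := by
    have h5 : orderOf (Units.mk0 g hg0) = n := by
      rw [← orderOf_units, Units.val_mk0, horder]
    rw [← Fintype.card_units, ← h5]
    exact orderOf_dvd_card
  have habs : Ideal.absNorm v.asIdeal = Fintype.card (𝓞 K ⧸ v.asIdeal) := by
    rw [Ideal.absNorm_apply, Submodule.cardQuot_apply, Nat.card_eq_fintype_card]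
  have hcard2 : 2 ≤ Fintype.card (𝓞 K ⧸ v.asIdeal) := Fintype.one_lt_card
  obtain ⟨m, hm⟩ := hdvdcard
  have hm1 : 1 ≤ m := by
    rcases Nat.eq_zero_or_pos m with h | h
    · rw [h, Nat.mul_zero] at hm; omega
    · exact h
  have hcard : Fintype.card (𝓞 K ⧸ v.asIdeal) = n * m + 1 := by omega
  constructor
  · rw [habs, hcard, Nat.mul_add_mod]
  · rw [habs, hcard]
    have : n ≤ n * m := Nat.le_mul_of_pos_right n hm1
    omega
end
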